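/- For a linear order I with universe (η·λ)·α where η is the order type of ℚ, λ an uncountable cardinal, and α a nonzero ordinal, the quotient of I by the equivalence relation E(x,y) := 'there are fewer than λ elements of I strictly between x and y' is order-isomorphic to (α, ≤). -/

import Mathlib

open Cardinal Set

/-- The linear order of order type `(η·λ)·α`, where `η` is the order type of `ℚ`:
the `α`-fold lexicographic sum of the `λ`-fold lexicographic sum of copies of `ℚ`. -/
def JOrd (lam : Cardinal.{0}) (α : Ordinal.{0}) : Type 1 :=
  {p : Ordinal ×ₗ Ordinal ×ₗ ℚ //
    (ofLex p).1 < α ∧ (ofLex (ofLex p).2).1 < lam.ord}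

noncomputable instance (lam : Cardinal.{0}) (α : Ordinal.{0}) : LinearOrder (JOrd lam α) :=
  inferInstanceAs (LinearOrder {p : Ordinal ×ₗ Ordinal ×ₗ ℚ //
    (ofLex p).1 < α ∧ (ofLex (ofLex p).2).1 < lam.ord})

namespace JOrdAux

variable {lam : Cardinal.{0}} {α : Ordinal.{0}}

/-- first coordinate -/
noncomputable def c1 (x : JOrd lam α) : Ordinal := (ofLex x.val).1
/-- second coordinate -/
noncomputable def c2 (x : JOrd lam α) : Ordinal := (ofLex (ofLex x.val).2).1
/-- third coordinate -/
noncomputable def c3 (x : JOrd lam α) : ℚ := (ofLex (ofLex x.val).2).2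

lemma jext {a b : JOrd lam α} (h1 : c1 a = c1 b) (h2 : c2 a = c2 b)
    (h3 : c3 a = c3 b) : a = b := by
  apply Subtype.ext
  have ha : a.val = toLex ((c1 a : Ordinal), toLex ((c2 a : Ordinal), c3 a)) := rfl
  have hb : b.val = toLex ((c1 b : Ordinal), toLex ((c2 b : Ordinal), c3 b)) := rfl
  rw [ha, hb, h1, h2, h3]

lemma lt_iff {a b : JOrd lam α} :
    a < b ↔ c1 a < c1 b ∨ (c1 a = c1 b ∧
      (c2 a < c2 b ∨ (c2 a = c2 b ∧ c3 a < c3 b))) := by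
  have h : a < b ↔ a.val < b.val := Iff.rfl
  rw [h]
  have h2 : a.val < b.val ↔ toLex (ofLex a.val) < toLex (ofLex b.val) := Iff.rfl
  rw [h2, Prod.Lex.lt_iff]
  constructor
  · rintro (h | ⟨he, h⟩)
    · exact Or.inl h
    · refine Or.inr ⟨he, ?_⟩
      have := (Prod.Lex.lt_iff (x := ofLex (ofLex a.val).2) (y := ofLex (ofLex b.val).2)).1 h
      exact this
  · rintro (h | ⟨he, h⟩)
    · exact Or.inl h
    · refine Or.inr ⟨he, ?_⟩
      exact (Prod.Lex.lt_iff (x := ofLex (ofLex a.val).2) (y := ofLex (ofLex b.val).2)).2 h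

lemma le_iff {a b : JOrd lam α} :
    a ≤ b ↔ c1 a < c1 b ∨ (c1 a = c1 b ∧ (ofLex a.val).2 ≤ (ofLex b.val).2) := by
  have h : a ≤ b ↔ a.val ≤ b.val := Iff.rfl
  rw [h]
  exact Prod.Lex.le_iff (x := ofLex a.val) (y := ofLex b.val)

/-- mk of the whole interval from below: if `c1 x < c1 y` then at least `lam` elements
lie strictly between `x` and `y`. -/
lemma lower_bound (hlam : Cardinal.aleph0 < lam) {x y : JOrd lam α}
    (h : c1 x < c1 y) :
    Cardinal.lift.{1, 0} lam ≤ Cardinal.mk {z : JOrd lam α | x < z ∧ z < y} := by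
  have hlim : Order.IsSuccLimit lam.ord := Cardinal.isSuccLimit_ord hlam.le
  have hmem : ∀ γ : ↥(Iio lam.ord), c2 x + 1 + γ.val < lam.ord := by
    intro γ
    rw [Cardinal.lt_ord, Ordinal.card_add, Ordinal.card_add]
    refine Cardinal.add_lt_of_lt hlam.le (Cardinal.add_lt_of_lt hlam.le ?_ ?_) ?_
    · exact Cardinal.lt_ord.1 x.prop.2
    · simpa using Cardinal.one_lt_aleph0.trans hlam
    · exact Cardinal.lt_ord.1 γ.prop
  have hp : ∀ γ : ↥(Iio lam.ord),
      (⟨toLex ((c1 x : Ordinal), toLex ((c2 x + 1 + γ.val : Ordinal), (0:ℚ))),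
        x.prop.1, hmem γ⟩ : JOrd lam α) ∈ {z : JOrd lam α | x < z ∧ z < y} := by
    intro γ
    constructor
    · refine lt_iff.2 (Or.inr ⟨rfl, Or.inl ?_⟩)
      show c2 x < c2 x + 1 + γ.val
      calc c2 x < c2 x + 1 := lt_add_one _
        _ ≤ c2 x + 1 + γ.val := le_self_add
    · exact lt_iff.2 (Or.inl h)
  set f : ↥(Iio lam.ord) → {z : JOrd lam α | x < z ∧ z < y} := fun γ =>
    ⟨⟨toLex ((c1 x : Ordinal), toLex ((c2 x + 1 + γ.val : Ordinal), (0:ℚ))),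
      x.prop.1, hmem γ⟩, hp γ⟩ with hf
  have hinj : Function.Injective f := by
    intro γ γ' hγ
    have h2 : c2 x + 1 + γ.val = c2 x + 1 + γ'.val := congrArg (fun z : {z : JOrd lam α | x < z ∧ z < y} => c2 z.val) hγ
    exact Subtype.ext (add_left_cancel h2)
  calc Cardinal.lift.{1,0} lam = Cardinal.mk ↥(Iio lam.ord) := by
        rw [Ordinal.mk_Iio_ordinal, Cardinal.card_ord]
    _ ≤ _ := Cardinal.mk_le_of_injective hinj

end JOrdAux

open JOrdAux in
/-- The quotient of `(η·λ)·α` by the convex equivalence relation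
`E(x,y) ⟺ "fewer than λ elements lie strictly between x and y"` is order-isomorphic to
`(α, ≤)`: there is a monotone surjection onto `α` whose fibers are exactly the `E`-classes. -/
theorem JOrd_quotient_iso (lam : Cardinal.{0}) (hlam : Cardinal.aleph0 < lam)
    (α : Ordinal.{0}) (hα : α ≠ 0) :
    ∃ g : JOrd lam α → ↥(Set.Iio α),
      Function.Surjective g ∧
      (∀ x y : JOrd lam α, x ≤ y → g x ≤ g y) ∧
      ∀ x y : JOrd lam α, g x = g y ↔
        Cardinal.mk {z : JOrd lam α | (x < z ∧ z < y) ∨ (y < z ∧ z < x)} <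
          Cardinal.lift.{1, 0} lam := by
  have hlim : Order.IsSuccLimit lam.ord := Cardinal.isSuccLimit_ord hlam.le
  have h0 : (0 : Ordinal) < lam.ord := hlim.pos
  refine ⟨fun x => ⟨c1 x, x.prop.1⟩, ?_, ?_, ?_⟩
  · rintro ⟨β, hβ⟩
    exact ⟨⟨toLex (β, toLex ((0:Ordinal), (0:ℚ))), hβ, h0⟩, rfl⟩
  · intro x y hxy
    rcases le_iff.1 hxy with h | h
    · exact le_of_lt h
    · exact le_of_eq (Subtype.ext h.1)
  · intro x y
    constructor
    · -- same class ⇒ few elements between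
      intro hg
      have hβ : c1 x = c1 y := congrArg Subtype.val hg
      set M := max (c2 x) (c2 y) with hM
      have hM1 : M + 1 < lam.ord := by
        have : M < lam.ord := max_lt x.prop.2 y.prop.2
        rw [Ordinal.add_one_eq_succ]; exact hlim.succ_lt this
      have key : ∀ z : JOrd lam α, ((x < z ∧ z < y) ∨ (y < z ∧ z < x)) →
          c2 z < M + 1 := by
        rintro z (⟨h1, h2⟩ | ⟨h1, h2⟩)
        · rcases lt_iff.1 h1 with hc | ⟨he1, _⟩
          · rcases lt_iff.1 h2 with hc' | ⟨he2, _⟩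
            · exact absurd (hc.trans hc') (by rw [hβ]; exact lt_irrefl _)
            · exact absurd (he2 ▸ hc) (by rw [hβ]; exact lt_irrefl _)
          · rcases lt_iff.1 h2 with hc' | ⟨he2, hin⟩
            · exact absurd (he1 ▸ hc') (by rw [hβ]; exact lt_irrefl _)
            · rcases hin with hlt | ⟨he3, _⟩
              · exact hlt.trans_le (le_of_lt (lt_of_le_of_lt (le_max_right _ _) (lt_add_one M)))
              · exact he3 ▸ lt_of_le_of_lt (le_max_right _ _) (lt_add_one M)
        · rcases lt_iff.1 h1 with hc | ⟨he1, _⟩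
          · rcases lt_iff.1 h2 with hc' | ⟨he2, _⟩
            · exact absurd (hc.trans hc') (by rw [hβ]; exact lt_irrefl _)
            · exact absurd (he2 ▸ hc) (by rw [hβ]; exact lt_irrefl _)
          · rcases lt_iff.1 h2 with hc' | ⟨he2, hin⟩
            · exact absurd (he1 ▸ hc') (by rw [hβ]; exact lt_irrefl _)
            · rcases hin with hlt | ⟨he3, _⟩
              · exact hlt.trans_le (le_of_lt (lt_of_le_of_lt (le_max_left _ _) (lt_add_one M)))
              · exact he3 ▸ lt_of_le_of_lt (le_max_left _ _) (lt_add_one M)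
      set S := {z : JOrd lam α | (x < z ∧ z < y) ∨ (y < z ∧ z < x)} with hS
      set f : ↥S → ↥(Iio (M + 1)) × ℚ := fun z => (⟨c2 z.val, key z.val z.prop⟩, c3 z.val)
        with hfd
      have hinj : Function.Injective f := by
        intro z z' hz
        have h2 : c2 z.val = c2 z'.val := congrArg (fun p => (p.1 : Ordinal)) hz
        have h3 : c3 z.val = c3 z'.val := congrArg (fun p => p.2) hz
        have h1 : c1 z.val = c1 z'.val := by
          have hz1 : c1 z.val = c1 x := by
            rcases z.prop with ⟨hzl, hzr⟩ | ⟨hzl, hzr⟩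
            · rcases lt_iff.1 hzl with hc | ⟨he, _⟩
              · rcases lt_iff.1 hzr with hc' | ⟨he', _⟩
                · exact absurd (hc.trans hc') (by rw [hβ]; exact lt_irrefl _)
                · exact absurd (he' ▸ hc) (by rw [hβ]; exact lt_irrefl _)
              · exact he.symm
            · rcases lt_iff.1 hzl with hc | ⟨he, _⟩
              · rcases lt_iff.1 hzr with hc' | ⟨he', _⟩
                · exact absurd (hc.trans hc') (by rw [hβ]; exact lt_irrefl _)
                · exact absurd (he' ▸ hc) (by rw [hβ]; exact lt_irrefl _)
              · exact hβ ▸ he.symm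
          have hz1' : c1 z'.val = c1 x := by
            rcases z'.prop with ⟨hzl, hzr⟩ | ⟨hzl, hzr⟩
            · rcases lt_iff.1 hzl with hc | ⟨he, _⟩
              · rcases lt_iff.1 hzr with hc' | ⟨he', _⟩
                · exact absurd (hc.trans hc') (by rw [hβ]; exact lt_irrefl _)
                · exact absurd (he' ▸ hc) (by rw [hβ]; exact lt_irrefl _)
              · exact he.symm
            · rcases lt_iff.1 hzl with hc | ⟨he, _⟩
              · rcases lt_iff.1 hzr with hc' | ⟨he', _⟩
                · exact absurd (hc.trans hc') (by rw [hβ]; exact lt_irrefl _)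
                · exact absurd (he' ▸ hc) (by rw [hβ]; exact lt_irrefl _)
              · exact hβ ▸ he.symm
          rw [hz1, hz1']
        exact Subtype.ext (jext h1 h2 h3)
      calc Cardinal.mk ↥S ≤ Cardinal.mk (↥(Iio (M + 1)) × ℚ) :=
            Cardinal.mk_le_of_injective hinj
        _ = Cardinal.lift.{0,1} (Cardinal.mk ↥(Iio (M + 1))) *
              Cardinal.lift.{1,0} (Cardinal.mk ℚ) := Cardinal.mk_prod _ _
        _ = Cardinal.lift.{1,0} ((M + 1).card * Cardinal.aleph0) := by
            rw [Ordinal.mk_Iio_ordinal, Cardinal.mk_denumerable, Cardinal.lift_lift,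
              Cardinal.lift_mul]
        _ < Cardinal.lift.{1,0} lam := by
            refine Cardinal.lift_lt.2 (Cardinal.mul_lt_of_lt hlam.le ?_ hlam)
            exact Cardinal.lt_ord.1 hM1
    · -- few elements between ⇒ same class
      intro hcard
      by_contra hne
      have hne1 : c1 x ≠ c1 y := fun h => hne (Subtype.ext h)
      have hlow : Cardinal.lift.{1,0} lam ≤
          Cardinal.mk {z : JOrd lam α | (x < z ∧ z < y) ∨ (y < z ∧ z < x)} := by
        rcases hne1.lt_or_gt with h | h
        · refine le_trans (lower_bound hlam h) (Cardinal.mk_le_mk_of_subset ?_)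
          exact fun z hz => Or.inl hz
        · refine le_trans (lower_bound hlam h) (Cardinal.mk_le_mk_of_subset ?_)
          exact fun z hz => Or.inr hz
      exact absurd hcard (not_lt.2 hlow)
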